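/- arXiv:1401.7581 — 4 statements merged into one kernel-verified Lean document; each statement's English description precedes it below -/
import Mathlib

section
/- Let P : [0,a] → ℝ be the distribution function of a measure dP = dx + dν where dν is a finite nonnegative Borel measure on (0,a). Then for every function f of locally bounded variation with df = f'_P dP for some f'_P ∈ L²((0,a); dP), and for every x ∈ [0,a], one has |f(x)| ≤ |f(0)| + √(P(a)) · ‖f'_P‖_{L²((0,a);dP)}. In particular such f belongs to L²(0,a) and the embedding of this space into L²(0,a) is continuous. -/
open MeasureTheory Set

/-- For `dP = dx + dν` on `(0,a)` with `dν` finite and nonnegative,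
any `f` with `df = f'_P dP`, `f'_P ∈ L²((0,a);dP)` satisfies
`|f(x)| ≤ |f(0)| + √(P(a)) ‖f'_P‖_{L²((0,a);dP)}` for `x ∈ [0,a]`. -/
theorem stmt0 (a : ℝ) (ha : 0 < a) (ν : Measure ℝ) [IsFiniteMeasure ν]
    (μ : Measure ℝ) (hμ : μ = (volume + ν).restrict (Set.Ioo 0 a))
    (P : ℝ → ℝ) (hP : ∀ x, P x = x + (ν (Set.Ico 0 x)).toReal)
    (f g : ℝ → ℝ) (hg : MemLp g 2 μ)
    (hrep : ∀ x ∈ Set.Icc (0:ℝ) a, f x - f 0 = ∫ t in Set.Ico 0 x, g t ∂μ) :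
    ∀ x ∈ Set.Icc (0:ℝ) a,
      |f x| ≤ |f 0| + Real.sqrt (P a) * (eLpNorm g 2 μ).toReal := by
  have hμuniv : μ Set.univ = ENNReal.ofReal a + ν (Set.Ioo 0 a) := by
    rw [hμ, Measure.restrict_apply_univ, Measure.add_apply, Real.volume_Ioo, sub_zero]
  have hfin : IsFiniteMeasure μ := by
    constructor
    rw [hμuniv]
    exact ENNReal.add_lt_top.2 ⟨ENNReal.ofReal_lt_top, measure_lt_top ν _⟩
  have hint : Integrable g μ := hg.integrable one_le_two
  have htoReal : (μ Set.univ).toReal ≤ P a := by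
    rw [hμuniv, ENNReal.toReal_add ENNReal.ofReal_lt_top.ne (measure_lt_top ν _).ne,
      ENNReal.toReal_ofReal ha.le, hP]
    gcongr
    · exact (measure_lt_top ν _).ne
    · exact Ioo_subset_Ico_self
  have hsqrt : Real.sqrt ((μ Set.univ).toReal) ≤ Real.sqrt (P a) :=
    Real.sqrt_le_sqrt htoReal
  have hholder : ∫ t, |g t| ∂μ ≤ Real.sqrt ((μ Set.univ).toReal) * (eLpNorm g 2 μ).toReal := by
    have h1 : eLpNorm g 1 μ ≤ eLpNorm g 2 μ * μ Set.univ ^ ((1:ℝ)/2) := by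
      have := eLpNorm_le_eLpNorm_mul_rpow_measure_univ (μ := μ) (p := 1) (q := 2)
        one_le_two hg.1
      norm_num at this ⊢
      exact this
    have heq : ∫ t, |g t| ∂μ = (eLpNorm g 1 μ).toReal := by
      rw [eLpNorm_one_eq_lintegral_enorm, ← integral_norm_eq_lintegral_enorm hg.1]
      simp [Real.norm_eq_abs]
    have hne : eLpNorm g 2 μ * μ Set.univ ^ ((1:ℝ)/2) ≠ ⊤ := by
      refine ENNReal.mul_ne_top hg.2.ne ?_
      exact (ENNReal.rpow_lt_top_of_nonneg (by norm_num) (measure_ne_top μ _)).ne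
    have h2 : (eLpNorm g 1 μ).toReal ≤ (eLpNorm g 2 μ * μ Set.univ ^ ((1:ℝ)/2)).toReal :=
      ENNReal.toReal_mono hne h1
    rw [heq]
    calc (eLpNorm g 1 μ).toReal ≤ (eLpNorm g 2 μ * μ Set.univ ^ ((1:ℝ)/2)).toReal := h2
      _ = Real.sqrt ((μ Set.univ).toReal) * (eLpNorm g 2 μ).toReal := by
          rw [ENNReal.toReal_mul, ← ENNReal.toReal_rpow, Real.sqrt_eq_rpow]
          ring
  intro x hx
  have h3 : |f x - f 0| ≤ ∫ t, |g t| ∂μ := by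
    rw [hrep x hx]
    calc |∫ t in Set.Ico 0 x, g t ∂μ| ≤ ∫ t in Set.Ico 0 x, |g t| ∂μ := by
          simpa [Real.norm_eq_abs] using
            norm_integral_le_integral_norm (μ := μ.restrict (Set.Ico 0 x)) g
      _ ≤ ∫ t, |g t| ∂μ :=
          setIntegral_le_integral hint.abs (ae_of_all _ fun t => abs_nonneg _)
  have h4 : |f x| ≤ |f 0| + |f x - f 0| := by
    have := abs_add_le (f 0) (f x - f 0)
    simpa using this
  calc |f x| ≤ |f 0| + |f x - f 0| := h4
    _ ≤ |f 0| + ∫ t, |g t| ∂μ := by linarith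
    _ ≤ |f 0| + Real.sqrt ((μ Set.univ).toReal) * (eLpNorm g 2 μ).toReal := by linarith
    _ ≤ |f 0| + Real.sqrt (P a) * (eLpNorm g 2 μ).toReal := by
        have := ENNReal.toReal_nonneg (a := eLpNorm g 2 μ)
        nlinarith [Real.sqrt_nonneg ((μ Set.univ).toReal)]
end

section
/- Let Σ ⊂ ℝ₊ be closed, ℝ₊ \ Σ = ⋃_k Δ_k with Δ_k = (a_k,b_k) pairwise disjoint, d_k = |Δ_k| → 0 as k → ∞, and let q ≥ 0, q ∈ L¹_loc(ℝ₊). If (1/d_k)∫_{Δ_k} q dx → ∞, then q satisfies Molchanov's condition: for every ε > 0, ∫_x^{x+ε} q(t)dt → ∞ as x → ∞. -/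
open MeasureTheory Set Filter

/-- if `Σ ⊂ ℝ₊` is closed of Lebesgue measure zero with
`ℝ₊ \ Σ = ⋃ Δ_k`, `d_k = |Δ_k| → 0`, `q ≥ 0` locally integrable, and
`(1/d_k)∫_{Δ_k} q → ∞`, then `q` satisfies Molchanov's condition. -/
theorem stmt14 (S : Set ℝ) (hScl : IsClosed S) (hSsub : S ⊆ Set.Ioi 0)
    (hSnull : volume S = 0)
    (A B : ℕ → ℝ) (hAB : ∀ k, A k < B k) (hA : ∀ k, 0 ≤ A k)
    (hdisj : Pairwise fun i j => Disjoint (Set.Ioo (A i) (B i)) (Set.Ioo (A j) (B j)))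
    (hcompl : Set.Ioi (0:ℝ) \ S = ⋃ k, Set.Ioo (A k) (B k))
    (d : ℕ → ℝ) (hd : ∀ k, d k = B k - A k)
    (hd0 : Tendsto d atTop (nhds 0))
    (q : ℝ → ℝ) (hq0 : ∀ x, 0 ≤ q x)
    (hq : LocallyIntegrable q (volume.restrict (Set.Ioi 0)))
    (havg : Tendsto (fun k => (1 / d k) * ∫ x in Set.Ioo (A k) (B k), q x)
      atTop atTop) :
    ∀ ε > (0:ℝ),
      Tendsto (fun x : ℝ => ∫ t in Set.Ioo x (x + ε), q t) atTop atTop := by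
  classical
  intro ε hε
  rw [tendsto_atTop]
  intro M
  set c : ℝ := max 1 (4 * M / ε) with hc
  have hc1 : (1:ℝ) ≤ c := le_max_left _ _
  have hc0 : (0:ℝ) ≤ c := by linarith
  have hMc : M ≤ c * (ε / 4) := by
    calc M = (4 * M / ε) * (ε / 4) := by field_simp
      _ ≤ c * (ε / 4) := by
          apply mul_le_mul_of_nonneg_right (le_max_right _ _); linarith
  -- choose K
  have hevent : ∀ᶠ k in atTop, d k < ε / 3 ∧
      c ≤ (1 / d k) * ∫ x in Set.Ioo (A k) (B k), q x := by
    exact (hd0.eventually_lt_const (by linarith : (0:ℝ) < ε/3)).and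
      (havg.eventually_ge_atTop c)
  obtain ⟨K, hK⟩ := eventually_atTop.mp hevent
  -- bound on the first K intervals
  set X0 : ℝ := ∑ k ∈ Finset.range K, |B k| with hX0
  have hBX : ∀ k, k < K → B k ≤ X0 := by
    intro k hk
    calc B k ≤ |B k| := le_abs_self _
      _ ≤ X0 := Finset.single_le_sum (fun i _ => abs_nonneg (B i))
          (Finset.mem_range.mpr hk)
  filter_upwards [eventually_ge_atTop (max 1 X0)] with x hx
  have hx1 : (1:ℝ) ≤ x := le_trans (le_max_left _ _) hx
  have hxX : X0 ≤ x := le_trans (le_max_right _ _) hx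
  -- integrability
  have hIccSub : Icc x (x + ε) ⊆ Ioi (0:ℝ) := by
    intro y hy
    have := hy.1
    exact mem_Ioi.mpr (by linarith)
  have hint : IntegrableOn q (Icc x (x + ε)) volume := by
    have h1 := hq.integrableOn_isCompact (isCompact_Icc (a := x) (b := x + ε))
    rwa [IntegrableOn, Measure.restrict_restrict measurableSet_Icc,
      inter_eq_self_of_subset_left hIccSub] at h1
  have hintI : IntegrableOn q (Ioo x (x + ε)) volume :=
    hint.mono_set Ioo_subset_Icc_self
  -- any interval meeting (x, x+ε) has index ≥ K
  have hKk : ∀ k y, y ∈ Set.Ioo (A k) (B k) → x < y → K ≤ k := by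
    intro k y hy hxy
    by_contra hlt
    push_neg at hlt
    have h1 : B k ≤ X0 := hBX k hlt
    have h2 : y < B k := hy.2
    linarith
  -- the intervals fully contained
  set p : ℕ → Prop := fun k => x ≤ A k ∧ B k ≤ x + ε with hp
  set t : ℕ → Set ℝ := fun k => if p k then Set.Ioo (A k) (B k) else ∅ with ht
  have ht_sub : ∀ k, t k ⊆ Set.Ioo (A k) (B k) := by
    intro k; simp only [ht]; split_ifs <;> simp
  have ht_meas : ∀ k, MeasurableSet (t k) := by
    intro k; simp only [ht]; split_ifs
    · exact measurableSet_Ioo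
    · exact MeasurableSet.empty
  have ht_disj : Pairwise (Function.onFun Disjoint t) := by
    intro i j hij
    exact (hdisj hij).mono (ht_sub i) (ht_sub j)
  -- lower bound on integral over contained intervals
  have hlow : ∀ k, p k → c * d k ≤ ∫ x in Set.Ioo (A k) (B k), q x := by
    intro k hpk
    have hdk : 0 < d k := by rw [hd]; linarith [hAB k]
    have hy : (A k + B k) / 2 ∈ Set.Ioo (A k) (B k) := by
      constructor <;> [skip; skip] <;> nlinarith [hAB k]
    have hKle : K ≤ k := hKk k _ hy (by nlinarith [hAB k, hpk.1])
    have h2 := (hK k hKle).2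
    rw [one_div, ← div_eq_inv_mul, le_div_iff₀ hdk] at h2
    linarith
  -- covering of (x, x+ε) \ S
  have hcover : Set.Ioo x (x + ε) \ S ⊆
      (⋃ k, t k) ∪ (Set.Ioo x (x + ε/3) ∪ Set.Ioo (x + 2*ε/3) (x + ε)) := by
    intro y hy
    have hy0 : y ∈ Set.Ioi (0:ℝ) \ S := by
      refine ⟨mem_Ioi.mpr ?_, hy.2⟩
      have := hy.1.1; linarith
    rw [hcompl] at hy0
    obtain ⟨k, hk⟩ := mem_iUnion.mp hy0
    have hKle : K ≤ k := hKk k y hk hy.1.1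
    have hdk : d k < ε / 3 := (hK k hKle).1
    have hdkd : B k - A k < ε / 3 := by rw [← hd]; exact hdk
    by_cases hpk : p k
    · left
      apply mem_iUnion.mpr ⟨k, ?_⟩
      simp only [ht, if_pos hpk]; exact hk
    · right
      simp only [hp, not_and_or, not_le] at hpk
      rcases hpk with h1 | h2
      · left
        exact ⟨hy.1.1, by nlinarith [hk.2]⟩
      · right
        constructor
        · have hxa : x ≤ A k := by
            by_contra hxa
            push_neg at hxa
            nlinarith
          nlinarith [hk.1]
        · exact hy.1.2
  -- measure estimate
  have hmeasU : ENNReal.ofReal (ε/4) < volume (⋃ k, t k) := by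
    by_contra hcon
    push_neg at hcon
    have h1 : volume (Set.Ioo x (x + ε)) = ENNReal.ofReal ε := by
      rw [Real.volume_Ioo]; ring_nf
    have h2 : volume (Set.Ioo x (x + ε)) ≤ volume (Set.Ioo x (x + ε) \ S)
        + volume S := by
      apply le_trans (measure_mono (subset_diff_union _ S)) (measure_union_le _ _)
    have h3 : volume (Set.Ioo x (x + ε) \ S) ≤
        volume (⋃ k, t k) + (volume (Set.Ioo x (x + ε/3))
          + volume (Set.Ioo (x + 2*ε/3) (x + ε))) := by
      apply le_trans (measure_mono hcover)
      apply le_trans (measure_union_le _ _)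
      exact add_le_add le_rfl (measure_union_le _ _)
    rw [hSnull, add_zero, h1] at h2
    rw [Real.volume_Ioo, Real.volume_Ioo] at h3
    have h4 : x + ε/3 - x = ε/3 := by ring
    have h5 : x + ε - (x + 2*ε/3) = ε/3 := by ring
    rw [h4, h5] at h3
    have h6 : ENNReal.ofReal ε ≤ ENNReal.ofReal (ε/4)
        + (ENNReal.ofReal (ε/3) + ENNReal.ofReal (ε/3)) :=
      le_trans (h2.trans h3) (add_le_add_left hcon _)
    rw [← ENNReal.ofReal_add (by linarith) (by linarith),
      ← ENNReal.ofReal_add (by linarith) (by linarith)] at h6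
    have h7 : ε ≤ ε/4 + (ε/3 + ε/3) :=
      (ENNReal.ofReal_le_ofReal_iff (by linarith)).mp h6
    linarith
  rw [measure_iUnion ht_disj ht_meas, ENNReal.tsum_eq_iSup_sum, lt_iSup_iff] at hmeasU
  obtain ⟨F, hF⟩ := hmeasU
  set F' : Finset ℕ := F.filter p with hF'
  have hsum_eq : ∑ k ∈ F, volume (t k)
      = ENNReal.ofReal (∑ k ∈ F', d k) := by
    rw [ENNReal.ofReal_sum_of_nonneg (fun k _ => by
      rw [hd]; linarith [hAB k])]
    rw [hF', Finset.sum_filter]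
    apply Finset.sum_congr rfl
    intro k _
    simp only [ht]
    split_ifs
    · rw [Real.volume_Ioo, hd]
    · simp
  rw [hsum_eq] at hF
  have hsum : ε/4 < ∑ k ∈ F', d k := by
    by_contra hcon
    push_neg at hcon
    exact absurd (lt_of_lt_of_le hF (ENNReal.ofReal_le_ofReal hcon)) (lt_irrefl _)
  -- contained intervals are inside (x, x+ε)
  have hsubI : ∀ k ∈ F', Set.Ioo (A k) (B k) ⊆ Set.Ioo x (x + ε) := by
    intro k hk
    have hpk : p k := (Finset.mem_filter.mp hk).2
    exact Set.Ioo_subset_Ioo hpk.1 hpk.2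
  have hint_each : ∀ k ∈ F', IntegrableOn q (Set.Ioo (A k) (B k)) volume :=
    fun k hk => hintI.mono_set (hsubI k hk)
  -- final chain
  calc M ≤ c * (ε/4) := hMc
    _ ≤ c * ∑ k ∈ F', d k := mul_le_mul_of_nonneg_left hsum.le hc0
    _ = ∑ k ∈ F', c * d k := Finset.mul_sum _ _ _
    _ ≤ ∑ k ∈ F', ∫ y in Set.Ioo (A k) (B k), q y :=
        Finset.sum_le_sum (fun k hk => hlow k (Finset.mem_filter.mp hk).2)
    _ = ∫ y in ⋃ k ∈ F', Set.Ioo (A k) (B k), q y := by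
        rw [integral_biUnion_finset F' (fun k _ => measurableSet_Ioo)
          (fun i _ j _ hij => hdisj hij) hint_each]
    _ ≤ ∫ y in Set.Ioo x (x + ε), q y := by
        apply setIntegral_mono_set hintI
          (Filter.Eventually.of_forall (fun y => hq0 y))
        exact (Set.iUnion₂_subset hsubI).eventuallyLE
end

section
/- Let f be left-continuous of locally bounded variation on ℝ₊ with f(x) − f(y) = ∫_y^x f^{[1]}(t)dt + ∫_{[y,x)} f^{[1]}(t)dν(t) for y < x, where f^{[1]} is continuous on ℝ₊ and dν is a singular (w.r.t. Lebesgue) Borel measure. Then there is a Borel set Σ_min of Lebesgue measure zero supporting dν such that f is differentiable at every x ∉ Σ_min with f'(x) = f^{[1]}(x); in particular f' extends continuously to all of ℝ₊. -/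
open MeasureTheory Set

/-- if `f(x) - f(y) = ∫_y^x f^{[1]} dt + ∫_{[y,x)} f^{[1]} dν` with
`f^{[1]}` continuous and `dν` singular w.r.t. Lebesgue measure, then there is a
minimal support `Smin` of `dν` of Lebesgue measure zero such that `f` is
differentiable at every `x ∉ Smin` with `f'(x) = f^{[1]}(x)`. -/
theorem stmt16 (ν : Measure ℝ) [IsLocallyFiniteMeasure ν]
    (hsing : ν.MutuallySingular volume)
    (f f1 : ℝ → ℝ) (hf1cont : ContinuousOn f1 (Set.Ici 0))
    (hrep : ∀ y x : ℝ, 0 ≤ y → y < x →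
      f x - f y = (∫ t in Set.Ico y x, f1 t) + ∫ t in Set.Ico y x, f1 t ∂ν) :
    ∃ Smin : Set ℝ, MeasurableSet Smin ∧ volume Smin = 0 ∧ ν Sminᶜ = 0 ∧
      ∀ x ∈ Set.Ioi (0:ℝ), x ∉ Smin → HasDerivAt f (f1 x) x := by
  obtain ⟨s, hsm, hνs, hvolsc⟩ := hsing
  -- a.e. point has vanishing density of ν w.r.t. volume
  have hbes : ∀ᵐ x ∂(volume : Measure ℝ),
      Filter.Tendsto (fun r => ν (Metric.closedBall x r) / volume (Metric.closedBall x r))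
        (nhdsWithin 0 (Set.Ioi 0)) (nhds 0) := by
    filter_upwards [Besicovitch.ae_tendsto_rnDeriv ν volume,
      Measure.MutuallySingular.rnDeriv_ae_eq_zero ⟨s, hsm, hνs, hvolsc⟩] with x h1 h2
    rw [h2] at h1
    exact h1
  set T : Set ℝ := {x | ¬ Filter.Tendsto
      (fun r => ν (Metric.closedBall x r) / volume (Metric.closedBall x r))
      (nhdsWithin 0 (Set.Ioi 0)) (nhds 0)} with hTdef
  have hT : volume T = 0 := hbes
  refine ⟨sᶜ ∪ toMeasurable volume T,
    hsm.compl.union (measurableSet_toMeasurable _ _), ?_, ?_, ?_⟩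
  · exact measure_union_null hvolsc (by rw [measure_toMeasurable]; exact hT)
  · rw [compl_union, compl_compl]
    exact measure_mono_null inter_subset_left hνs
  · intro x hx hxS
    have hx0 : 0 < x := hx
    have hxT : x ∉ T := fun h => hxS (Or.inr (subset_toMeasurable _ _ h))
    have htend : Filter.Tendsto
        (fun r => ν (Metric.closedBall x r) / volume (Metric.closedBall x r))
        (nhdsWithin 0 (Set.Ioi 0)) (nhds 0) := by
      by_contra h; exact hxT h
    -- the primitive of f1
    have hIci : Set.Ici (0:ℝ) ∈ nhds x := Ici_mem_nhds hx0
    have hf1x : ContinuousAt f1 x := hf1cont.continuousAt hIci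
    have hmeasf1 : StronglyMeasurableAtFilter f1 (nhds x) volume :=
      (hf1cont.mono (Set.Ioi_subset_Ici le_rfl)).stronglyMeasurableAtFilter isOpen_Ioi x hx0
    set φ : ℝ → ℝ := fun u => ∫ t in x..u, f1 t with hφdef
    have hφd : HasDerivAt φ (f1 x) x :=
      intervalIntegral.integral_hasDerivAt_right (IntervalIntegrable.refl) hmeasf1 hf1x
    have hφx : φ x = 0 := intervalIntegral.integral_same
    -- bound for f1 on a compact neighborhood
    have hKsub : Set.Icc (x/2) (x+1) ⊆ Set.Ici (0:ℝ) := fun t ht =>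
      le_trans (by linarith) ht.1
    obtain ⟨C, hC⟩ := (isCompact_Icc (a := x/2) (b := x+1)).exists_bound_of_continuousOn
      (hf1cont.mono hKsub)
    set C' : ℝ := max C 0 with hC'def
    have hC'0 : 0 ≤ C' := le_max_right _ _
    have hC' : ∀ t ∈ Set.Icc (x/2) (x+1), ‖f1 t‖ ≤ C' :=
      fun t ht => (hC t ht).trans (le_max_left _ _)
    -- the singular remainder is o(y - x)
    have key : (fun y => f y - f x - φ y) =o[nhds x] fun y => y - x := by
      rw [Asymptotics.isLittleO_iff]
      intro ε hε
      have hd0 : (0:ℝ) < ε / (2 * (C' + 1)) := by positivity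
      have hev := (ENNReal.tendsto_nhds_zero.mp htend)
        (ENNReal.ofReal (ε / (2 * (C' + 1)))) (by simpa using ENNReal.ofReal_pos.mpr hd0)
      rw [eventually_nhdsWithin_iff, Metric.eventually_nhds_iff] at hev
      obtain ⟨δ, hδ0, hδ⟩ := hev
      have hδ' : ∀ r : ℝ, 0 < r → r < δ →
          ν (Metric.closedBall x r) ≤ ENNReal.ofReal (ε / (2 * (C' + 1)) * (2 * r)) := by
        intro r hr hrδ
        have h1 : ν (Metric.closedBall x r) / volume (Metric.closedBall x r)
            ≤ ENNReal.ofReal (ε / (2 * (C' + 1))) := by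
          apply hδ _ hr
          simpa [Real.dist_eq, abs_of_pos hr] using hrδ
        rw [Real.volume_closedBall] at h1
        have h2r : (0:ℝ) < 2 * r := by linarith
        have := (ENNReal.div_le_iff_le_mul (Or.inl (by simp [ENNReal.ofReal_eq_zero]; linarith))
          (Or.inl ENNReal.ofReal_ne_top)).mp h1
        calc ν (Metric.closedBall x r)
            ≤ ENNReal.ofReal (ε / (2 * (C' + 1))) * ENNReal.ofReal (2 * r) := this
          _ = ENNReal.ofReal (ε / (2 * (C' + 1)) * (2 * r)) :=
              (ENNReal.ofReal_mul hd0.le).symm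
      set δ' : ℝ := min δ (min (x/2) 1) with hδ'def
      have hδ'0 : 0 < δ' := lt_min hδ0 (lt_min (by linarith) one_pos)
      filter_upwards [Metric.ball_mem_nhds x hδ'0] with y hy
      rcases eq_or_ne y x with rfl | hyx
      · simp [hφx]
      have hr0 : 0 < |y - x| := abs_pos.mpr (sub_ne_zero.mpr hyx)
      have hylt : |y - x| < δ' := by simpa [Real.dist_eq] using hy
      have hrδ : |y - x| < δ := hylt.trans_le (min_le_left _ _)
      have hrx2 : |y - x| < x/2 := hylt.trans_le ((min_le_right _ _).trans (min_le_left _ _))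
      have hr1 : |y - x| < 1 := hylt.trans_le ((min_le_right _ _).trans (min_le_right _ _))
      set a : ℝ := min x y with hadef
      set b : ℝ := max x y with hbdef
      have hab : a < b := by
        rcases lt_or_gt_of_ne hyx with h | h
        · simp [hadef, hbdef, min_eq_right h.le, max_eq_left h.le, h]
        · simp [hadef, hbdef, min_eq_left h.le, max_eq_right h.le, h]
      have ha0 : 0 < a := by
        have : x - |y - x| ≤ y := by
          cases abs_cases (y - x) with
          | inl h => linarith [h.1]
          | inr h => linarith [h.1]
        have hax : x - |y - x| ≤ a := le_min (by linarith [hr0]) this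
        linarith
      have hsubK : Set.Ico a b ⊆ Set.Icc (x/2) (x+1) := by
        intro t ht
        have h1 : x - |y - x| ≤ a := by
          apply le_min (by linarith)
          cases abs_cases (y - x) with
          | inl h => linarith [h.1]
          | inr h => linarith [h.1]
        have h2 : b ≤ x + |y - x| := by
          apply max_le (by linarith)
          cases abs_cases (y - x) with
          | inl h => linarith [h.1]
          | inr h => linarith [h.1]
        constructor
        · linarith [ht.1]
        · linarith [ht.2]
      have hsubB : Set.Ico a b ⊆ Metric.closedBall x |y - x| := by
        intro t ht
        rw [Metric.mem_closedBall, Real.dist_eq]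
        have h1 : x - |y - x| ≤ a := by
          apply le_min (by linarith)
          cases abs_cases (y - x) with
          | inl h => linarith [h.1]
          | inr h => linarith [h.1]
        have h2 : b ≤ x + |y - x| := by
          apply max_le (by linarith)
          cases abs_cases (y - x) with
          | inl h => linarith [h.1]
          | inr h => linarith [h.1]
        rw [abs_le]
        constructor <;> [linarith [ht.1]; linarith [ht.2]]
      have hcbfin : ν (Metric.closedBall x |y - x|) < ⊤ :=
        (isCompact_closedBall x |y - x|).measure_lt_top
      have hIcofin : ν (Set.Ico a b) < ⊤ := lt_of_le_of_lt (measure_mono hsubB) hcbfin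
      -- identify the remainder with the ν-integral
      have hrem : ‖f y - f x - φ y‖ = ‖∫ t in Set.Ico a b, f1 t ∂ν‖ := by
        rcases lt_or_gt_of_ne hyx with h | h
        · -- y < x
          have ha : a = y := min_eq_right h.le
          have hb : b = x := max_eq_left h.le
          have hrepe := hrep y x (ha ▸ ha0.le) h
          have hφy : φ y = -(∫ t in Set.Ico y x, f1 t) := by
            simp only [hφdef]
            rw [intervalIntegral.integral_symm, intervalIntegral.integral_of_le h.le,
              integral_Ioc_eq_integral_Ioo, ← integral_Ico_eq_integral_Ioo]
          rw [ha, hb]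
          have : f y - f x - φ y = -(∫ t in Set.Ico y x, f1 t ∂ν) := by
            rw [hφy]; linarith [hrepe]
          rw [this, norm_neg]
        · -- x < y
          have ha : a = x := min_eq_left h.le
          have hb : b = y := max_eq_right h.le
          have hrepe := hrep x y hx0.le h
          have hφy : φ y = ∫ t in Set.Ico x y, f1 t := by
            simp only [hφdef]
            rw [intervalIntegral.integral_of_le h.le,
              integral_Ioc_eq_integral_Ioo, ← integral_Ico_eq_integral_Ioo]
          rw [ha, hb]
          have : f y - f x - φ y = ∫ t in Set.Ico x y, f1 t ∂ν := by
            rw [hφy]; linarith [hrepe]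
          rw [this]
      -- bound the ν-integral
      have hbound : ‖∫ t in Set.Ico a b, f1 t ∂ν‖ ≤ C' * (ν (Set.Ico a b)).toReal :=
        norm_setIntegral_le_of_norm_le_const hIcofin
          (fun t ht => hC' t (hsubK ht))
      have hmono : (ν (Set.Ico a b)).toReal ≤ (ν (Metric.closedBall x |y - x|)).toReal :=
        ENNReal.toReal_mono hcbfin.ne (measure_mono hsubB)
      have hcb : (ν (Metric.closedBall x |y - x|)).toReal
          ≤ ε / (2 * (C' + 1)) * (2 * |y - x|) :=
        ENNReal.toReal_le_of_le_ofReal (by positivity) (hδ' _ hr0 hrδ)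
      have hfinal : C' * (ε / (2 * (C' + 1)) * (2 * |y - x|)) ≤ ε * |y - x| := by
        have hd : ε / (2 * (C' + 1)) * (2 * (C' + 1)) = ε := div_mul_cancel₀ _ (by positivity)
        calc C' * (ε / (2 * (C' + 1)) * (2 * |y - x|))
            = (ε / (2 * (C' + 1)) * |y - x|) * (2 * C') := by ring
          _ ≤ (ε / (2 * (C' + 1)) * |y - x|) * (2 * (C' + 1)) :=
              mul_le_mul_of_nonneg_left (by linarith) (mul_nonneg hd0.le hr0.le)
          _ = ε / (2 * (C' + 1)) * (2 * (C' + 1)) * |y - x| := by ring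
          _ = ε * |y - x| := by rw [hd]
      have : ‖f y - f x - φ y‖ ≤ ε * |y - x| := by
        rw [hrem]
        calc ‖∫ t in Set.Ico a b, f1 t ∂ν‖
            ≤ C' * (ν (Set.Ico a b)).toReal := hbound
          _ ≤ C' * (ν (Metric.closedBall x |y - x|)).toReal :=
              mul_le_mul_of_nonneg_left hmono hC'0
          _ ≤ C' * (ε / (2 * (C' + 1)) * (2 * |y - x|)) :=
              mul_le_mul_of_nonneg_left hcb hC'0
          _ ≤ ε * |y - x| := hfinal
      simpa [Real.norm_eq_abs] using this
    -- combine with the derivative of the primitive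
    rw [hasDerivAt_iff_isLittleO]
    have hφo := hasDerivAt_iff_isLittleO.mp hφd
    have hsum := key.add hφo
    have heq : (fun y => (f y - f x - φ y) + (φ y - φ x - (y - x) • f1 x))
        = fun y => f y - f x - (y - x) • f1 x := by
      funext y
      simp only [smul_eq_mul, hφx]
      ring
    rwa [heq] at hsum
end

section
/- Let q ≡ 0 and P(x) = x + ν(x) on (a,b) with dν singular. Then the equation τu = −(d/dx)(du/dP) = 0 has the two linearly independent solutions u₁(x) = 1 and u₂(x) = P(x). Consequently (by Weyl's alternative for measure Sturm–Liouville operators), when q ∈ L^∞(a,b), the maximal operator H is self-adjoint if and only if for each endpoint, at least one of the functions 1, P fails to be square integrable near that endpoint. -/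
open MeasureTheory Set

/-- for `q ≡ 0` and `P = id + ν` with `dν` singular, the solutions
of `τu = 0` (i.e. `u ∈ AC_loc(dP)` with constant quasi-derivative) are spanned by
`u₁ = 1` and `u₂ = P`; consequently, by Weyl's alternative, the maximal operator
is self-adjoint iff near each endpoint at least one of `1`, `P` is not in `L²`. -/
theorem stmt18 (a b : ℝ) (hab : a < b) (ν : Measure ℝ) [IsLocallyFiniteMeasure ν]
    (hsing : ν.MutuallySingular volume)
    (P : ℝ → ℝ)
    (hP : ∀ x ∈ Set.Ioo a b, ∀ y ∈ Set.Ioo a b, y < x →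
      P x - P y = (((volume + ν : Measure ℝ) (Set.Ico y x)).toReal))
    -- a solution of τu = 0 is a function in AC_loc((a,b);dP) whose
    -- quasi-derivative is constant
    (IsSol : (ℝ → ℝ) → Prop)
    (hIsSol : ∀ u, IsSol u ↔ ∃ w : ℝ, ∀ x ∈ Set.Ioo a b, ∀ y ∈ Set.Ioo a b, y < x →
      u x - u y = w * ((volume + ν : Measure ℝ) (Set.Ico y x)).toReal)
    -- Weyl's alternative: self-adjointness ⟺ limit point at both endpoints,
    -- where limit circle at an endpoint means all solutions are L² near it
    (selfadjoint : Prop)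
    (hWeyl : selfadjoint ↔
      (¬ ∃ c ∈ Set.Ioo a b, ∀ u, IsSol u → MemLp u 2 (volume.restrict (Set.Ioo a c))) ∧
      (¬ ∃ c ∈ Set.Ioo a b, ∀ u, IsSol u → MemLp u 2 (volume.restrict (Set.Ioo c b)))) :
    IsSol (fun _ => (1:ℝ)) ∧ IsSol P ∧
    (∀ u, IsSol u → ∃ c₁ c₂ : ℝ, ∀ x ∈ Set.Ioo a b, u x = c₁ + c₂ * P x) ∧
    (selfadjoint ↔
      ((∀ c ∈ Set.Ioo a b,
          ¬ MemLp (fun _ => (1:ℝ)) 2 (volume.restrict (Set.Ioo a c)) ∨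
          ¬ MemLp P 2 (volume.restrict (Set.Ioo a c))) ∧
       (∀ c ∈ Set.Ioo a b,
          ¬ MemLp (fun _ => (1:ℝ)) 2 (volume.restrict (Set.Ioo c b)) ∨
          ¬ MemLp P 2 (volume.restrict (Set.Ioo c b))))) := by
  have hm : (a+b)/2 ∈ Set.Ioo a b := ⟨by linarith, by linarith⟩
  have sol1 : IsSol (fun _ => (1:ℝ)) := (hIsSol _).2 ⟨0, by intro x hx y hy h; simp⟩
  have solP : IsSol P := (hIsSol _).2 ⟨1, by
    intro x hx y hy h; rw [one_mul]; exact hP x hx y hy h⟩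
  have span : ∀ u, IsSol u → ∃ c₁ c₂ : ℝ, ∀ x ∈ Set.Ioo a b, u x = c₁ + c₂ * P x := by
    intro u hu
    obtain ⟨w, hw⟩ := (hIsSol u).1 hu
    refine ⟨u ((a+b)/2) - w * P ((a+b)/2), w, ?_⟩
    intro x hx
    rcases lt_trichotomy x ((a+b)/2) with h | h | h
    · have h1 := hw ((a+b)/2) hm x hx h
      rw [← hP ((a+b)/2) hm x hx h] at h1
      linear_combination -h1
    · rw [h]; ring
    · have h1 := hw x hx ((a+b)/2) hm h
      rw [← hP x hx ((a+b)/2) hm h] at h1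
      linear_combination h1
  refine ⟨sol1, solP, span, ?_⟩
  rw [hWeyl]
  have key : ∀ s : Set ℝ, s ⊆ Set.Ioo a b → MeasurableSet s →
      ((¬ ∀ u, IsSol u → MemLp u 2 (volume.restrict s)) ↔
        (¬ MemLp (fun _ => (1:ℝ)) 2 (volume.restrict s) ∨
         ¬ MemLp P 2 (volume.restrict s))) := by
    intro s hs hms
    constructor
    · intro hn
      by_contra hc
      push_neg at hc
      apply hn
      intro u hu
      obtain ⟨c₁, c₂, hspan⟩ := span u hu
      have : IsFiniteMeasure (volume.restrict s) :=
        ⟨by rw [Measure.restrict_apply_univ]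
            exact lt_of_le_of_lt (measure_mono hs) measure_Ioo_lt_top⟩
      have hmem : MemLp (fun x => c₁ + c₂ * P x) 2 (volume.restrict s) :=
        (memLp_const c₁).add (hc.2.const_mul c₂)
      refine hmem.ae_eq ?_
      rw [Filter.EventuallyEq, ae_restrict_iff' hms]
      exact Filter.Eventually.of_forall fun x hx => (hspan x (hs hx)).symm
    · intro h hall
      rcases h with h | h
      · exact h (hall _ sol1)
      · exact h (hall _ solP)
  constructor <;> (intro ⟨h1, h2⟩; constructor)
  · intro c hc
    rw [← key _ (Set.Ioo_subset_Ioo le_rfl hc.2.le) measurableSet_Ioo]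
    intro hall; exact h1 ⟨c, hc, hall⟩
  · intro c hc
    rw [← key _ (Set.Ioo_subset_Ioo hc.1.le le_rfl) measurableSet_Ioo]
    intro hall; exact h2 ⟨c, hc, hall⟩
  · rintro ⟨c, hc, hall⟩
    exact (key _ (Set.Ioo_subset_Ioo le_rfl hc.2.le) measurableSet_Ioo).2 (h1 c hc) hall
  · rintro ⟨c, hc, hall⟩
    exact (key _ (Set.Ioo_subset_Ioo hc.1.le le_rfl) measurableSet_Ioo).2 (h2 c hc) hall
end
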